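/- arXiv:1605.06755 — 2 statements merged into one kernel-verified Lean document; each statement's English description precedes it below -/
import Mathlib

section
/- For a path connected finite T₀ space P, the following chain of inequalities holds: cat(P) ≤ TC(P) = CC(P) ≤ cat(P × P) ≤ (#Max(P))². -/
open Set

/-- The finite fence poset `0 < 1 > 2 < ⋯ m` on `m+1` points. -/
def J (m : ℕ) : Type := Fin (m + 1)

namespace J

/-- The underlying natural number of a point of the fence. -/
def val {m : ℕ} (i : J m) : ℕ := @Fin.val (m + 1) i

instance (m : ℕ) : PartialOrder (J m) where
  le i j := i.val = j.val ∨ (j.val % 2 = 1 ∧ (j.val = i.val + 1 ∨ i.val = j.val + 1))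
  le_refl i := Or.inl rfl
  le_trans a b c h₁ h₂ := by
    show a.val = c.val ∨ (c.val % 2 = 1 ∧ (c.val = a.val + 1 ∨ a.val = c.val + 1))
    rcases h₁ with h₁ | h₁ <;> rcases h₂ with h₂ | h₂ <;> omega
  le_antisymm a b h₁ h₂ := by
    have : a.val = b.val := by rcases h₁ with h₁ | h₁ <;> rcases h₂ with h₂ | h₂ <;> omega
    exact @Fin.val_injective (m + 1) a b this

instance (m : ℕ) : Finite (J m) := inferInstanceAs (Finite (Fin (m + 1)))

/-- The initial point `0` of the fence. -/
def zero {m : ℕ} : J m := (0 : Fin (m + 1))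

/-- The terminal point `m` of the fence. -/
def last {m : ℕ} : J m := Fin.last m

end J

/-- The Alexandrov topology on a preordered set: open sets are the lower sets (ideals). -/
def alexTop (α : Type*) [Preorder α] : TopologicalSpace α where
  IsOpen s := IsLowerSet s
  isOpen_univ := isLowerSet_univ
  isOpen_inter _ _ := IsLowerSet.inter
  isOpen_sUnion _ := isLowerSet_sUnion

instance (m : ℕ) : TopologicalSpace (J m) := alexTop (J m)

/-- `P × P` can be covered by `n` open sets, each admitting a continuous section of
`q_m : P^{J_m} → P × P`, `γ ↦ (γ(0), γ(m))`. -/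
def hasCCCover (P : Type*) [TopologicalSpace P] (m n : ℕ) : Prop :=
  ∃ U : Fin n → Set (P × P), (∀ i, IsOpen (U i)) ∧ (⋃ i, U i) = Set.univ ∧
    ∀ i, ∃ s : C(U i, C(J m, P)),
      ∀ x : U i, (s x) J.zero = (x : P × P).1 ∧ (s x) J.last = (x : P × P).2

/-- The combinatorial complexity at length `m`. -/
noncomputable def CCm (P : Type*) [TopologicalSpace P] (m : ℕ) : ℕ∞ :=
  sInf ((↑) '' {n : ℕ | hasCCCover P m n})

/-- The combinatorial complexity `CC(P) = min_m CC_m(P)`. -/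
noncomputable def CC (P : Type*) [TopologicalSpace P] : ℕ∞ := ⨅ m, CCm P m

/-- `X × X` can be covered by `n` open sets, each admitting a continuous section of the
path fibration `X^I → X × X`. -/
def hasTCCover (X : Type*) [TopologicalSpace X] (n : ℕ) : Prop :=
  ∃ U : Fin n → Set (X × X), (∀ i, IsOpen (U i)) ∧ (⋃ i, U i) = Set.univ ∧
    ∀ i, ∃ s : C(U i, C(unitInterval, X)),
      ∀ x : U i, (s x) 0 = (x : X × X).1 ∧ (s x) 1 = (x : X × X).2

/-- Farber's topological complexity. -/
noncomputable def topComplexity (X : Type*) [TopologicalSpace X] : ℕ∞ :=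
  sInf ((↑) '' {n : ℕ | hasTCCover X n})

/-- A subset is contractible in the ambient space when its inclusion is null-homotopic. -/
def ContractibleIn {X : Type*} [TopologicalSpace X] (A : Set X) : Prop :=
  ∃ x₀ : X, ContinuousMap.Homotopic ⟨Subtype.val, continuous_subtype_val⟩
    (ContinuousMap.const A x₀)

/-- The (unreduced) Lusternik–Schnirelmann category. -/
noncomputable def cat (X : Type*) [TopologicalSpace X] : ℕ∞ :=
  sInf ((↑) '' {n : ℕ | ∃ U : Fin n → Set X, (∀ i, IsOpen (U i)) ∧ (⋃ i, U i) = Set.univ ∧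
    ∀ i, ContractibleIn (U i)})


-- basics about J
lemma J.isOpen_iff {m : ℕ} {S : Set (J m)} : IsOpen S ↔ IsLowerSet S := Iff.rfl
lemma J.le_iff {m : ℕ} {i j : J m} :
    i ≤ j ↔ (i.val = j.val ∨ (j.val % 2 = 1 ∧ (j.val = i.val + 1 ∨ i.val = j.val + 1))) := Iff.rfl
def J.mk {m : ℕ} (a : ℕ) (h : a ≤ m) : J m := (⟨a, Nat.lt_succ_of_le h⟩ : Fin (m + 1))
lemma J.mk_val {m : ℕ} (a : ℕ) (h : a ≤ m) : (J.mk a h).val = a := rfl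
lemma J.zero_val {m : ℕ} : (J.zero (m := m)).val = 0 := rfl
lemma J.last_val {m : ℕ} : (J.last (m := m)).val = m := rfl
lemma J.val_le {m : ℕ} (i : J m) : i.val ≤ m := Nat.lt_succ_iff.mp (@Fin.isLt (m+1) i)
lemma J.val_inj {m : ℕ} {i j : J m} (h : i.val = j.val) : i = j := @Fin.val_injective (m+1) i j h

/-- Joint continuity of a monotone family of continuous maps, as a map on `X × J m`. -/
lemma pieceJoint {P : Type*} [Preorder P] [TopologicalSpace P]
    (hop : ∀ V : Set P, IsOpen V → IsLowerSet V)
    {X : Type*} [TopologicalSpace X] {m : ℕ} (g : J m → C(X, P))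
    (mono : ∀ j j' : J m, j ≤ j' → ∀ x, g j x ≤ g j' x) :
    Continuous fun p : X × J m => g p.2 p.1 := by
  rw [continuous_def]
  intro V hV
  have : (fun p : X × J m => g p.2 p.1) ⁻¹' V =
      ⋃ j : J m, (g j ⁻¹' V) ×ˢ {j' : J m | j' ≤ j} := by
    ext ⟨x, j⟩
    simp only [Set.mem_preimage, Set.mem_iUnion, Set.mem_prod, Set.mem_setOf_eq]
    constructor
    · exact fun h => ⟨j, h, le_refl j⟩
    · rintro ⟨j', hx, hle⟩
      exact hop V hV (mono j j' hle x) hx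
  rw [this]
  exact isOpen_iUnion fun j => IsOpen.prod ((g j).continuous.isOpen_preimage V hV)
    (J.isOpen_iff.mpr (fun a b hba ha => le_trans hba ha))
/-- Specialization comparability. -/
def SpecComp {X : Type*} [TopologicalSpace X] (x y : X) : Prop :=
  (∀ O : Set X, IsOpen O → x ∈ O → y ∈ O) ∨ (∀ O : Set X, IsOpen O → y ∈ O → x ∈ O)

lemma specComp_refl {X : Type*} [TopologicalSpace X] (x : X) : SpecComp x x := Or.inl fun _ _ h => h

/-- Pointwise comparability of two maps. -/
def PWComp {Y P : Type*} [Preorder P] [TopologicalSpace Y] [TopologicalSpace P]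
    (f g : C(Y, P)) : Prop := (∀ y, f y ≤ g y) ∨ (∀ y, g y ≤ f y)

lemma homotopyOfLE {Q X : Type*} [Preorder Q] [TopologicalSpace Q] [TopologicalSpace X]
    (hop : ∀ V : Set Q, IsOpen V → IsLowerSet V)
    (f g : C(X, Q)) (hfg : ∀ x, f x ≤ g x) : f.Homotopic g := by
  have hne : (0 : unitInterval) ≠ 1 := by
    intro h
    have := congrArg Subtype.val h
    norm_num at this
  classical
  refine ⟨⟨⟨fun p => if p.1 = 1 then g p.2 else f p.2, ?_⟩, ?_, ?_⟩⟩
  · rw [continuous_def]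
    intro V hV
    have heq : (fun p : unitInterval × X => if p.1 = 1 then g p.2 else f p.2) ⁻¹' V =
        {t : unitInterval | t ≠ 1} ×ˢ (f ⁻¹' V) ∪ Set.univ ×ˢ (g ⁻¹' V) := by
      ext ⟨t, x⟩
      by_cases ht : t = 1
      · subst ht
        simp only [Set.mem_preimage, if_pos rfl, Set.mem_union, Set.mem_prod,
          Set.mem_setOf_eq, ne_eq, not_true_eq_false, false_and, Set.mem_univ, true_and,
          false_or, if_true]
      · simp only [Set.mem_preimage, if_neg ht, Set.mem_union, Set.mem_prod,
          Set.mem_setOf_eq, ne_eq, ht, not_false_eq_true, true_and, Set.mem_univ]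
        exact ⟨fun h => Or.inl h, fun h => h.elim id (fun hg => hop V hV (hfg x) hg)⟩
    rw [heq]
    exact (isOpen_ne.prod (f.continuous.isOpen_preimage V hV)).union
      (isOpen_univ.prod (g.continuous.isOpen_preimage V hV))
  · intro x
    simp only [ContinuousMap.coe_mk]
    rw [if_neg hne]
  · intro x
    simp only [ContinuousMap.coe_mk]
    simp

lemma specLE {Y P : Type*} [TopologicalSpace Y] [PartialOrder P] [TopologicalSpace P]
    (hP : ∀ s : Set P, IsOpen s ↔ IsLowerSet s)
    (f g : C(Y, P)) (h : ∀ O : Set C(Y, P), IsOpen O → f ∈ O → g ∈ O) :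
    ∀ y, g y ≤ f y := by
  intro y
  have hO : IsOpen {h : C(Y, P) | Set.MapsTo h {y} (Set.Iic (f y))} :=
    ContinuousMap.isOpen_setOf_mapsTo isCompact_singleton ((hP _).mpr (isLowerSet_Iic _))
  have hfO : f ∈ {h : C(Y, P) | Set.MapsTo h {y} (Set.Iic (f y))} := by
    intro z hz
    rw [Set.mem_singleton_iff] at hz
    subst hz
    exact le_refl _
  exact h _ hO hfO (Set.mem_singleton y)

lemma specComp_pw {Y P : Type*} [TopologicalSpace Y] [PartialOrder P] [TopologicalSpace P]
    (hP : ∀ s : Set P, IsOpen s ↔ IsLowerSet s) (f g : C(Y, P))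
    (h : SpecComp f g) : PWComp f g :=
  h.elim (fun h' => Or.inr (specLE hP f g h')) (fun h' => Or.inl (specLE hP g f h'))

lemma chain_of_rtg {X : Type*} {r : X → X → Prop} {a b : X}
    (h : Relation.ReflTransGen r a b) :
    ∃ (k : ℕ) (c : ℕ → X), c 0 = a ∧ c k = b ∧ ∀ i < k, r (c i) (c (i+1)) := by
  induction h with
  | refl => exact ⟨0, fun _ => a, rfl, rfl, by omega⟩
  | @tail b' c' hab hbc ih =>
    obtain ⟨k, c, h0, hk, hstep⟩ := ih
    refine ⟨k + 1, fun i => if i ≤ k then c i else c', ?_, ?_, ?_⟩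
    · simpa using h0
    · simp
    · intro i hi
      by_cases hik : i < k
      · have e1 : (if i ≤ k then c i else c') = c i := if_pos (by omega)
        have e2 : (if i + 1 ≤ k then c (i+1) else c') = c (i+1) := if_pos (by omega)
        simp only [e1, e2]
        exact hstep i hik
      · have : i = k := by omega
        subst this
        have e1 : (if i ≤ i then c i else c') = c i := if_pos (le_refl i)
        have e2 : (if i + 1 ≤ i then c (i+1) else c') = c' := if_neg (by omega)
        simp only [e1, e2]
        rw [hk]
        exact hbc

lemma chain_pad {X : Type*} {r : X → X → Prop} (hrefl : ∀ x, r x x) {a b : X}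
    {k : ℕ} {c : ℕ → X} (h0 : c 0 = a) (hk : c k = b) (hstep : ∀ i < k, r (c i) (c (i+1)))
    {K : ℕ} (hK : k ≤ K) :
    ∃ c' : ℕ → X, c' 0 = a ∧ c' K = b ∧ ∀ i < K, r (c' i) (c' (i+1)) := by
  refine ⟨fun i => c (min i k), by simpa using h0, by show c (min K k) = b; rw [min_eq_right hK]; exact hk, ?_⟩
  intro i hi
  show r (c (min i k)) (c (min (i+1) k))
  by_cases hik : i < k
  · rw [min_eq_left (by omega), min_eq_left (by omega)]
    exact hstep i hik
  · rw [min_eq_right (by omega), min_eq_right (by omega)]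
    exact hrefl _


/-- In a finite space, the endpoints of a path are connected by a zigzag of
specialization-comparable points. -/
lemma pathFence {X : Type*} [TopologicalSpace X] [Finite X] (p : C(unitInterval, X)) :
    Relation.ReflTransGen SpecComp (p 0) (p 1) := by
  set S : Set X := {y | Relation.ReflTransGen SpecComp (p 0) y} with hS
  have hK : ∀ y : X, IsOpen (⋂₀ {O : Set X | IsOpen O ∧ y ∈ O}) := fun y =>
    Set.Finite.isOpen_sInter (Set.toFinite _) (fun O hO => hO.1)
  have hKmem : ∀ y : X, y ∈ ⋂₀ {O : Set X | IsOpen O ∧ y ∈ O} := fun y O hO => hO.2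
  have hKspec : ∀ y z : X, z ∈ ⋂₀ {O : Set X | IsOpen O ∧ y ∈ O} →
      ∀ O : Set X, IsOpen O → y ∈ O → z ∈ O := fun y z hz O hO hy => hz O ⟨hO, hy⟩
  have hSopen : IsOpen S := by
    rw [isOpen_iff_forall_mem_open]
    intro y hy
    refine ⟨_, fun z hz => ?_, hK y, hKmem y⟩
    exact Relation.ReflTransGen.tail hy (Or.inl (hKspec y z hz))
  have hScopen : IsOpen Sᶜ := by
    rw [isOpen_iff_forall_mem_open]
    intro y hy
    refine ⟨_, fun z hz hzS => hy ?_, hK y, hKmem y⟩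
    exact Relation.ReflTransGen.tail hzS (Or.inr (hKspec y z hz))
  have hclopen : IsClopen (p ⁻¹' S) := by
    constructor
    · rw [← isOpen_compl_iff, ← Set.preimage_compl]
      exact hScopen.preimage p.continuous
    · exact hSopen.preimage p.continuous
  have h0 : (0 : unitInterval) ∈ p ⁻¹' S := Relation.ReflTransGen.refl
  have := (isClopen_iff.mp hclopen).resolve_left (fun h => by simp [h] at h0)
  have h1 : (1 : unitInterval) ∈ p ⁻¹' S := this ▸ Set.mem_univ _
  exact h1
lemma pwComp_refl {Y P : Type*} [Preorder P] [TopologicalSpace Y] [TopologicalSpace P]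
    (f : C(Y, P)) : PWComp f f := Or.inl fun _ => le_refl _

/-- From a chain of pointwise-comparable maps, a continuous family of fence paths. -/
lemma chainSection {P : Type*} [PartialOrder P] [TopologicalSpace P]
    (hP : ∀ s : Set P, IsOpen s ↔ IsLowerSet s)
    {X : Type*} [TopologicalSpace X] (k : ℕ) (h : ℕ → C(X, P))
    (comp : ∀ i < k, PWComp (h i) (h (i+1))) :
    ∃ s : C(X, C(J (2*k), P)), ∀ x, s x J.zero = h 0 x ∧ s x J.last = h k x := by
  classical
  set gOdd : ℕ → C(X, P) := fun i => if (∀ y, h i y ≤ h (i+1) y) then h (i+1) else h i with hgOdd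
  have hA : ∀ i, ∀ y, h i y ≤ gOdd i y := by
    intro i y
    by_cases hc : ∀ y, h i y ≤ h (i+1) y
    · rw [hgOdd]; simp only [if_pos hc]; exact hc y
    · rw [hgOdd]; simp only [if_neg hc]
      exact le_refl _
  have hB : ∀ i < k, ∀ y, h (i+1) y ≤ gOdd i y := by
    intro i hi y
    by_cases hc : ∀ y, h i y ≤ h (i+1) y
    · rw [hgOdd]; simp only [if_pos hc]
      exact le_refl _
    · rw [hgOdd]; simp only [if_neg hc]
      exact ((comp i hi).resolve_left hc) y
  set g : J (2*k) → C(X, P) :=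
    fun j => if j.val % 2 = 0 then h (j.val / 2) else gOdd (j.val / 2) with hg
  have mono : ∀ j j' : J (2*k), j ≤ j' → ∀ x, g j x ≤ g j' x := by
    intro j j' hle x
    rcases J.le_iff.mp hle with heq | ⟨hodd, hadj⟩
    · rw [J.val_inj heq]
    · have hjval : j.val % 2 = 0 := by omega
      have hj'2 : ¬ (j'.val % 2 = 0) := by omega
      have hvle : j'.val ≤ 2*k := J.val_le j'
      rw [hg]
      simp only [if_pos hjval, if_neg hj'2]
      rcases hadj with h1 | h2
      · have hv : j.val / 2 = j'.val / 2 := by omega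
        rw [hv]
        exact hA _ x
      · have hv : j.val / 2 = j'.val / 2 + 1 := by omega
        rw [hv]
        exact hB _ (by omega) x
  have hcont : Continuous fun p : X × J (2*k) => g p.2 p.1 :=
    pieceJoint (fun V hV => (hP V).mp hV) g mono
  refine ⟨ContinuousMap.curry ⟨_, hcont⟩, fun x => ⟨?_, ?_⟩⟩
  · show g J.zero x = h 0 x
    rw [hg]
    have h0 : (J.zero : J (2*k)).val = 0 := rfl
    simp only [h0]
    norm_num
  · show g J.last x = h k x
    rw [hg]
    have hlast : (J.last : J (2*k)).val = 2*k := rfl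
    have e1 : 2*k % 2 = 0 := by omega
    have e2 : 2*k / 2 = k := by omega
    simp only [hlast, e1, e2, if_pos]

/-- Homotopic maps into a finite space are connected by a pointwise-comparable chain. -/
lemma fenceOfHomotopic {P : Type*} [PartialOrder P] [Finite P] [TopologicalSpace P]
    (hP : ∀ s : Set P, IsOpen s ↔ IsLowerSet s)
    {Y : Type*} [TopologicalSpace Y] [Finite Y] (f g : C(Y, P))
    (h : f.Homotopic g) :
    ∃ (k : ℕ) (c : ℕ → C(Y, P)), c 0 = f ∧ c k = g ∧ ∀ i < k, PWComp (c i) (c (i+1)) := by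
  obtain ⟨H⟩ := h
  haveI : Finite C(Y, P) := Finite.of_injective _ (DFunLike.coe_injective)
  let p : C(unitInterval, C(Y, P)) := ContinuousMap.curry H.toContinuousMap
  have hp0 : p 0 = f := by
    ext y
    exact H.map_zero_left y
  have hp1 : p 1 = g := by
    ext y
    exact H.map_one_left y
  have hfence := pathFence p
  rw [hp0, hp1] at hfence
  obtain ⟨k, c, h0, hk, hstep⟩ := chain_of_rtg hfence
  exact ⟨k, c, h0, hk, fun i hi => specComp_pw hP _ _ (hstep i hi)⟩
/-- The value of the discretization map `I → J m`. -/
noncomputable def phiAux (m : ℕ) (t : unitInterval) : ℕ :=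
  if ((t : ℝ) * m = ⌊(t : ℝ) * m⌋₊ ∨ ⌊(t : ℝ) * m⌋₊ % 2 = 0) then ⌊(t : ℝ) * m⌋₊
  else ⌊(t : ℝ) * m⌋₊ + 1

lemma phiAux_le (m : ℕ) (t : unitInterval) : phiAux m t ≤ m := by
  have h0 : (0 : ℝ) ≤ (t : ℝ) * m := mul_nonneg t.2.1 (Nat.cast_nonneg m)
  have h1 : (t : ℝ) * m ≤ m := by
    calc (t : ℝ) * m ≤ 1 * m := by
          apply mul_le_mul_of_nonneg_right t.2.2 (Nat.cast_nonneg m)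
      _ = m := one_mul _
  have hfl : ⌊(t : ℝ) * m⌋₊ ≤ m := by
    have := Nat.floor_le_of_le h1
    simpa using this
  unfold phiAux
  split
  · exact hfl
  · rename_i hcond
    push_neg at hcond
    have hne := hcond.1
    have hlt : (⌊(t : ℝ) * m⌋₊ : ℝ) < (t : ℝ) * m := lt_of_le_of_ne (Nat.floor_le h0) (fun h => hne h.symm)
    have : (⌊(t : ℝ) * m⌋₊ : ℝ) < (m : ℝ) := lt_of_lt_of_le hlt h1
    have : ⌊(t : ℝ) * m⌋₊ < m := by exact_mod_cast this
    omega

/-- The discretization map `I → J m`. -/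
noncomputable def phiMap (m : ℕ) (t : unitInterval) : J m := J.mk (phiAux m t) (phiAux_le m t)

lemma phiMap_zero (m : ℕ) : phiMap m 0 = J.zero := by
  apply J.val_inj
  show phiAux m 0 = 0
  unfold phiAux
  norm_num

lemma phiMap_one (m : ℕ) : phiMap m 1 = J.last := by
  apply J.val_inj
  show phiAux m 1 = m
  unfold phiAux
  norm_num

lemma phiMap_cont (m : ℕ) : Continuous (phiMap m) := by
  have key : ∀ t : unitInterval, ∃ ε > (0:ℝ), ∀ t' : unitInterval,
      |(t' : ℝ) - (t : ℝ)| < ε → phiMap m t' ≤ phiMap m t := by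
    intro t
    set x : ℝ := (t : ℝ) * m with hxdef
    have hx0 : (0:ℝ) ≤ x := mul_nonneg t.2.1 (Nat.cast_nonneg m)
    set k : ℕ := ⌊x⌋₊ with hkdef
    by_cases hint : x = (k : ℝ)
    · -- integer case
      refine ⟨1 / (m + 1), by positivity, ?_⟩
      intro t' ht'
      set x' : ℝ := (t' : ℝ) * m with hx'def
      have hx'0 : (0:ℝ) ≤ x' := mul_nonneg t'.2.1 (Nat.cast_nonneg m)
      set k' : ℕ := ⌊x'⌋₊ with hk'def
      have hxx' : |x' - x| < 1 := by
        have heq : |x' - x| = |(t' : ℝ) - (t : ℝ)| * m := by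
          rw [hx'def, hxdef, ← sub_mul, abs_mul, abs_of_nonneg (Nat.cast_nonneg m : (0:ℝ) ≤ m)]
        rw [heq]
        rcases Nat.eq_zero_or_pos m with hm0 | hm0
        · subst hm0; norm_num
        · calc |(t' : ℝ) - (t : ℝ)| * m < (1 / (m+1)) * m :=
                mul_lt_mul_of_pos_right ht' (by exact_mod_cast hm0)
            _ ≤ 1 := by
                rw [div_mul_eq_mul_div, one_mul, div_le_one (by positivity)]
                push_cast; linarith
      -- value at t
      have hvt : phiAux m t = k := by
        unfold phiAux
        rw [← hxdef, ← hkdef, if_pos (Or.inl hint)]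
      -- bounds on k'
      have hfl' : (k' : ℝ) ≤ x' := Nat.floor_le hx'0
      have hfl'2 : x' < (k' : ℝ) + 1 := Nat.lt_floor_add_one x'
      have habs := abs_lt.mp hxx'
      have hk'k : k' ≤ k := by
        have : (k' : ℝ) < (k : ℝ) + 1 := by rw [hint] at habs; linarith
        exact_mod_cast Nat.lt_succ_iff.mp (by exact_mod_cast this)
      have hkk' : k ≤ k' + 1 := by
        have : (k : ℝ) < (k' : ℝ) + 2 := by rw [hint] at habs; linarith
        have : k < k' + 2 := by exact_mod_cast this
        omega
      -- conclude
      apply J.le_iff.mpr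
      have hv1 : (phiMap m t').val = phiAux m t' := J.mk_val _ _
      have hv2 : (phiMap m t).val = phiAux m t := J.mk_val _ _
      rw [hv1, hv2, hvt]
      by_cases hint' : x' = (k' : ℝ)
      · have hvt' : phiAux m t' = k' := by
          unfold phiAux
          rw [← hx'def, ← hk'def, if_pos (Or.inl hint')]
        -- then |k' - k| < 1 so k' = k
        have : (k : ℝ) < (k' : ℝ) + 1 := by rw [hint, hint'] at habs; linarith
        have hk'k2 : k < k' + 1 := by exact_mod_cast this
        rw [hvt']
        omega
      · have hk'lt : (k' : ℝ) < x' := lt_of_le_of_ne hfl' (fun h => hint' h.symm)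
        -- k' = k or k' = k - 1
        have hkcase : k' = k ∨ k + 1 = k' + 2 := by
          have : (k:ℝ) - 1 < x' := by rw [hint] at habs; linarith
          have h2 : (k:ℝ) < (k':ℝ) + 2 := by linarith
          have h3 : k < k' + 2 := by exact_mod_cast h2
          omega
        by_cases hpar : k' % 2 = 0
        · have hvt' : phiAux m t' = k' := by
            unfold phiAux
            rw [← hx'def, ← hk'def, if_pos (Or.inr hpar)]
          rw [hvt']
          rcases hkcase with h | h
          · omega
          · -- k' = k - 1, k' even so k odd
            right
            constructor
            · omega
            · omega
        · have hvt' : phiAux m t' = k' + 1 := by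
            unfold phiAux
            rw [← hx'def, ← hk'def, if_neg (by push_neg; exact ⟨fun h => hint' h, hpar⟩)]
          rw [hvt']
          rcases hkcase with h | h
          · -- k' = k, k odd (k'=k odd since k'%2≠0)
            right
            constructor
            · omega
            · omega
          · omega
    · -- non-integer case
      have hklt : (k : ℝ) < x := lt_of_le_of_ne (Nat.floor_le hx0) (fun h => hint h.symm)
      have hklt2 : x < (k : ℝ) + 1 := Nat.lt_floor_add_one x
      have hm : 0 < m := by
        rcases Nat.eq_zero_or_pos m with hm | hm
        · exfalso; apply hint
          rw [hxdef, hm]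
          simp [hkdef, hxdef, hm]
        · exact hm
      have hminpos : (0:ℝ) < min (x - k) ((k : ℝ) + 1 - x) := by
        apply lt_min <;> linarith
      refine ⟨(min (x - k) ((k : ℝ) + 1 - x)) / m, by
        apply div_pos hminpos
        exact_mod_cast hm, ?_⟩
      intro t' ht'
      set x' : ℝ := (t' : ℝ) * m with hx'def
      have hxx' : |x' - x| < min (x - k) ((k : ℝ) + 1 - x) := by
        have heq : |x' - x| = |(t' : ℝ) - (t : ℝ)| * m := by
          rw [hx'def, hxdef, ← sub_mul, abs_mul, abs_of_nonneg (Nat.cast_nonneg m : (0:ℝ) ≤ m)]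
        rw [heq]
        have := mul_lt_mul_of_pos_right ht' (by exact_mod_cast hm : (0:ℝ) < m)
        rwa [div_mul_cancel₀] at this
        exact_mod_cast hm.ne'
      have habs := abs_lt.mp hxx'
      have h1 : (k : ℝ) < x' := by
        have := lt_min_iff.mp hxx'  -- not right form; use habs
        nlinarith [habs.1, min_le_left (x - k) ((k:ℝ)+1-x)]
      have h2 : x' < (k : ℝ) + 1 := by
        nlinarith [habs.2, min_le_right (x - k) ((k:ℝ)+1-x)]
      have hfl : ⌊x'⌋₊ = k := by
        rw [Nat.floor_eq_iff (le_trans (Nat.cast_nonneg k) (le_of_lt h1))]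
        constructor
        · exact le_of_lt h1
        · push_cast; linarith
      have hne' : x' ≠ (⌊x'⌋₊ : ℝ) := by
        rw [hfl]; exact ne_of_gt h1
      -- phiAux t' = phiAux t
      have : phiAux m t' = phiAux m t := by
        unfold phiAux
        rw [← hx'def, ← hxdef, hfl]
        by_cases hpar : k % 2 = 0
        · rw [if_pos (Or.inr hpar), if_pos (Or.inr hpar)]
        · rw [if_neg (by push_neg; exact ⟨fun h => (ne_of_gt h1) h, hpar⟩),
            if_neg (by push_neg; exact ⟨hint, hpar⟩)]
      exact le_of_eq (J.val_inj (show phiAux m t' = phiAux m t from this))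
  rw [continuous_def]
  intro S hS
  have hls : IsLowerSet S := hS
  rw [Metric.isOpen_iff]
  intro t ht
  obtain ⟨ε, hε, hkey⟩ := key t
  refine ⟨ε, hε, fun t' ht' => ?_⟩
  apply hls (hkey t' ?_) ht
  rw [Metric.mem_ball, Subtype.dist_eq, Real.dist_eq] at ht'
  exact ht'
section Glue
variable {P : Type*} [TopologicalSpace P]

/-- Realizing a fence section as a genuine path section. -/
lemma tcSection_of_ccSection {m : ℕ} {U : Set (P × P)}
    (s : C(U, C(J m, P)))
    (hs : ∀ x : U, s x J.zero = (x : P × P).1 ∧ s x J.last = (x : P × P).2) :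
    ∃ s' : C(U, C(unitInterval, P)),
      ∀ x : U, s' x 0 = (x : P × P).1 ∧ s' x 1 = (x : P × P).2 := by
  refine ⟨⟨fun x => (s x).comp ⟨phiMap m, phiMap_cont m⟩,
    (ContinuousMap.continuous_precomp _).comp s.continuous⟩, fun x => ⟨?_, ?_⟩⟩
  · show s x (phiMap m 0) = _
    rw [phiMap_zero]
    exact (hs x).1
  · show s x (phiMap m 1) = _
    rw [phiMap_one]
    exact (hs x).2

lemma hasTCCover_of_hasCCCover {m n : ℕ} (h : hasCCCover P m n) : hasTCCover P n := by
  obtain ⟨U, hUo, hUc, hs⟩ := h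
  refine ⟨U, hUo, hUc, fun i => ?_⟩
  obtain ⟨s, hsend⟩ := hs i
  exact tcSection_of_ccSection s hsend

/-- First projection restricted to a subset of `P × P`. -/
def fstMap (U : Set (P × P)) : C(U, P) :=
  ⟨fun x => (x : P × P).1, continuous_fst.comp continuous_subtype_val⟩

/-- Second projection restricted to a subset of `P × P`. -/
def sndMap (U : Set (P × P)) : C(U, P) :=
  ⟨fun x => (x : P × P).2, continuous_snd.comp continuous_subtype_val⟩

lemma fst_homotopic_snd_of_section {U : Set (P × P)}
    (s : C(U, C(unitInterval, P)))
    (hs : ∀ x : U, s x 0 = (x : P × P).1 ∧ s x 1 = (x : P × P).2) :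
    (fstMap U).Homotopic (sndMap U) := by
  refine ⟨⟨⟨fun p => s p.2 p.1, ?_⟩, fun x => (hs x).1, fun x => (hs x).2⟩⟩
  exact continuous_eval.comp
    ((s.continuous.comp continuous_snd).prodMk continuous_fst)

lemma fst_homotopic_snd_of_contractibleIn [PathConnectedSpace P]
    {U : Set (P × P)} (h : ContractibleIn U) : (fstMap U).Homotopic (sndMap U) := by
  obtain ⟨z₀, hz⟩ := h
  have h1 : (fstMap U).Homotopic (ContinuousMap.const U z₀.1) :=
    ContinuousMap.Homotopic.comp
      (ContinuousMap.Homotopic.refl (⟨Prod.fst, continuous_fst⟩ : C(P × P, P))) hz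
  have h2 : (sndMap U).Homotopic (ContinuousMap.const U z₀.2) :=
    ContinuousMap.Homotopic.comp
      (ContinuousMap.Homotopic.refl (⟨Prod.snd, continuous_snd⟩ : C(P × P, P))) hz
  have h3 : (ContinuousMap.const U z₀.1).Homotopic (ContinuousMap.const U z₀.2) := by
    obtain ⟨p⟩ : Joined z₀.1 z₀.2 := PathConnectedSpace.joined _ _
    refine ⟨⟨⟨fun q => p q.1, p.continuous.comp continuous_fst⟩, ?_, ?_⟩⟩
    · intro x
      simp
    · intro x
      simp
  exact (h1.trans h3).trans h2.symm

end Glue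

lemma ccCover_of_homotopies {P : Type*} [PartialOrder P] [Finite P] [TopologicalSpace P]
    (hP : ∀ s : Set P, IsOpen s ↔ IsLowerSet s) {n : ℕ}
    (U : Fin n → Set (P × P)) (hUo : ∀ i, IsOpen (U i)) (hUc : (⋃ i, U i) = Set.univ)
    (hH : ∀ i, (fstMap (U i)).Homotopic (sndMap (U i))) :
    ∃ m, hasCCCover P m n := by
  have key := fun i => fenceOfHomotopic hP _ _ (hH i)
  choose k c h0 hk hstep using key
  set K := Finset.univ.sup k with hKdef
  have hpad := fun i => chain_pad (fun f => pwComp_refl f) (h0 i) (hk i) (hstep i)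
    (Finset.le_sup (Finset.mem_univ i))
  choose c' h0' hk' hstep' using hpad
  refine ⟨2 * K, U, hUo, hUc, fun i => ?_⟩
  obtain ⟨s, hs⟩ := chainSection hP K (c' i) (hstep' i)
  refine ⟨s, fun x => ⟨?_, ?_⟩⟩
  · rw [(hs x).1, h0' i]
    rfl
  · rw [(hs x).2, hk' i]
    rfl

lemma prod_open_lower {P Q : Type*} [Preorder P] [Preorder Q]
    [TopologicalSpace P] [TopologicalSpace Q]
    (hp : ∀ V : Set P, IsOpen V → IsLowerSet V) (hq : ∀ V : Set Q, IsOpen V → IsLowerSet V) :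
    ∀ V : Set (P × Q), IsOpen V → IsLowerSet V := by
  intro V hV p q hle hp'
  rw [isOpen_prod_iff] at hV
  obtain ⟨u, v, hu, hv, h1, h2, huv⟩ := hV p.1 p.2 (by simpa using hp')
  have : (q.1, q.2) ∈ u ×ˢ v := ⟨hp u hu hle.1 h1, hq v hv hle.2 h2⟩
  simpa using huv this

lemma exists_le_isMax {P : Type*} [PartialOrder P] [Finite P] (x : P) :
    ∃ y, x ≤ y ∧ IsMax y := by
  obtain ⟨b, hb, hmax⟩ := Set.Finite.exists_maximalFor id (Set.Ici x)
    (Set.toFinite _) ⟨x, le_refl x⟩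
  refine ⟨b, hb, fun c hc => ?_⟩
  have : b = c := le_antisymm hc (hmax (le_trans hb hc) hc)
  exact le_of_eq this.symm

lemma catCover_prod {P : Type*} [PartialOrder P] [Finite P] [TopologicalSpace P]
    (hP : ∀ s : Set P, IsOpen s ↔ IsLowerSet s) :
    ∃ Um : Fin (Nat.card {x : P // IsMax x} ^ 2) → Set (P × P),
      (∀ i, IsOpen (Um i)) ∧ (⋃ i, Um i) = Set.univ ∧ ∀ i, ContractibleIn (Um i) := by
  have hop : ∀ V : Set P, IsOpen V → IsLowerSet V := fun V hV => (hP V).mp hV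
  set M := {x : P // IsMax x} with hM
  let e : Fin (Nat.card M ^ 2) ≃ M × M :=
    ((finCongr (pow_two (Nat.card M))).trans finProdFinEquiv.symm).trans
      (Equiv.prodCongr (Finite.equivFin M).symm (Finite.equivFin M).symm)
  refine ⟨fun i => Set.Iic ((e i).1 : P) ×ˢ Set.Iic ((e i).2 : P), fun i => ?_, ?_, fun i => ?_⟩
  · exact ((hP _).mpr (isLowerSet_Iic _)).prod ((hP _).mpr (isLowerSet_Iic _))
  · ext ⟨x, y⟩
    simp only [Set.mem_iUnion, Set.mem_prod, Set.mem_Iic, Set.mem_univ, iff_true]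
    obtain ⟨a, hxa, ha⟩ := exists_le_isMax x
    obtain ⟨b, hyb, hb⟩ := exists_le_isMax y
    refine ⟨e.symm (⟨a, ha⟩, ⟨b, hb⟩), ?_⟩
    rw [Equiv.apply_symm_apply]
    exact ⟨hxa, hyb⟩
  · refine ⟨(((e i).1 : P), ((e i).2 : P)),
      homotopyOfLE (prod_open_lower hop hop) _ _ ?_⟩
    rintro ⟨⟨x, y⟩, hxy⟩
    exact Prod.mk_le_mk.mpr ⟨hxy.1, hxy.2⟩

lemma catCover_of_tcCover {X : Type*} [TopologicalSpace X] (x₀ : X) {n : ℕ}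
    (h : hasTCCover X n) :
    ∃ U : Fin n → Set X, (∀ i, IsOpen (U i)) ∧ (⋃ i, U i) = Set.univ ∧
      ∀ i, ContractibleIn (U i) := by
  obtain ⟨U, hUo, hUc, hsec⟩ := h
  refine ⟨fun i => {x | (x₀, x) ∈ U i},
    fun i => (hUo i).preimage (continuous_const.prodMk continuous_id), ?_, fun i => ?_⟩
  · ext x
    simp only [Set.mem_iUnion, Set.mem_setOf_eq, Set.mem_univ, iff_true]
    have hx : (x₀, x) ∈ ⋃ i, U i := hUc ▸ Set.mem_univ _
    simpa using hx
  · obtain ⟨s, hs⟩ := hsec i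
    refine ⟨x₀, ContinuousMap.Homotopic.symm ⟨⟨⟨fun p => s ⟨(x₀, (p.2 : X)), p.2.2⟩ p.1, ?_⟩,
      fun x => (hs _).1, fun x => (hs _).2⟩⟩⟩
    have hincl : Continuous fun x : {x | (x₀, x) ∈ U i} => (⟨(x₀, (x : X)), x.2⟩ : U i) :=
      Continuous.subtype_mk (continuous_const.prodMk continuous_subtype_val) _
    exact continuous_eval.comp
      (((s.continuous.comp hincl).comp continuous_snd).prodMk continuous_fst)

/-- For a path connected finite space `P`,
`cat(P) ≤ TC(P) = CC(P) ≤ cat(P × P) ≤ (#Max(P))²`. -/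
theorem cat_le_TC_eq_CC_le_cat_sq
    (P : Type) [PartialOrder P] [Finite P] [TopologicalSpace P] [PathConnectedSpace P]
    (hP : ∀ s : Set P, IsOpen s ↔ IsLowerSet s) :
    cat P ≤ topComplexity P ∧ topComplexity P = CC P ∧
      CC P ≤ cat (P × P) ∧ cat (P × P) ≤ (Nat.card {x : P // IsMax x} : ℕ∞) ^ 2 := by
  have hop : ∀ V : Set P, IsOpen V → IsLowerSet V := fun V hV => (hP V).mp hV
  obtain ⟨x₀⟩ : Nonempty P := PathConnectedSpace.nonempty
  have h1 : cat P ≤ topComplexity P := by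
    apply le_sInf
    rintro b ⟨n, hn, rfl⟩
    exact sInf_le ⟨n, catCover_of_tcCover x₀ hn, rfl⟩
  have h2 : topComplexity P ≤ CC P := by
    apply le_iInf
    intro m
    apply le_sInf
    rintro b ⟨n, hn, rfl⟩
    exact sInf_le ⟨n, hasTCCover_of_hasCCCover hn, rfl⟩
  have h3 : CC P ≤ topComplexity P := by
    apply le_sInf
    rintro b ⟨n, hn, rfl⟩
    obtain ⟨U, hUo, hUc, hs⟩ := hn
    have hH : ∀ i, (fstMap (U i)).Homotopic (sndMap (U i)) := fun i => by
      obtain ⟨s, hse⟩ := hs i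
      exact fst_homotopic_snd_of_section s hse
    obtain ⟨m, hcc⟩ := ccCover_of_homotopies hP U hUo hUc hH
    exact le_trans (iInf_le _ m) (sInf_le ⟨n, hcc, rfl⟩)
  have h4 : CC P ≤ cat (P × P) := by
    apply le_sInf
    rintro b ⟨n, ⟨U, hUo, hUc, hcontr⟩, rfl⟩
    have hH : ∀ i, (fstMap (U i)).Homotopic (sndMap (U i)) := fun i =>
      fst_homotopic_snd_of_contractibleIn (hcontr i)
    obtain ⟨m, hcc⟩ := ccCover_of_homotopies hP U hUo hUc hH
    exact le_trans (iInf_le _ m) (sInf_le ⟨n, hcc, rfl⟩)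
  have h5 : cat (P × P) ≤ (Nat.card {x : P // IsMax x} : ℕ∞) ^ 2 := by
    obtain ⟨Um, hUo, hUc, hcontr⟩ := catCover_prod hP
    have hcast : ((Nat.card {x : P // IsMax x} ^ 2 : ℕ) : ℕ∞) =
        (Nat.card {x : P // IsMax x} : ℕ∞) ^ 2 := by push_cast; ring
    exact hcast ▸ sInf_le ⟨_, ⟨Um, hUo, hUc, hcontr⟩, rfl⟩
  exact ⟨h1, le_antisymm h2 h3, h4, h5⟩
end

section
/- Let P be the four-point poset {a, b, c, d} with a < c, a < d, b < c, b < d (the minimal finite model of the circle), with the Alexandrov topology. Then TC(P) = CC(P) = 4. -/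
open Set

/-- The minimal finite model of the circle: points `a = (false,false)`, `b = (false,true)`
(minimal) and `c = (true,false)`, `d = (true,true)` (maximal), with `a,b < c,d`. -/
def Circ : Type := Bool × Bool

namespace Circ

/-- `true` on the maximal points `c, d`; `false` on the minimal points `a, b`. -/
def level (x : Circ) : Bool := @Prod.fst Bool Bool x

instance : PartialOrder Circ where
  le x y := x = y ∨ (x.level = false ∧ y.level = true)
  le_refl x := Or.inl rfl
  le_trans a b c h₁ h₂ := by
    rcases h₁ with rfl | h₁
    · exact h₂
    · rcases h₂ with rfl | h₂
      · exact Or.inr h₁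
      · exact Or.inr ⟨h₁.1, h₂.2⟩
  le_antisymm a b h₁ h₂ := by
    rcases h₁ with rfl | h₁
    · rfl
    · rcases h₂ with rfl | h₂
      · rfl
      · exact absurd h₁.2 (by simp [h₂.1])

instance : Finite Circ := inferInstanceAs (Finite (Bool × Bool))

instance : TopologicalSpace Circ := alexTop Circ

def a : Circ := ((false, false) : Bool × Bool)
def b : Circ := ((false, true) : Bool × Bool)
def c : Circ := ((true, false) : Bool × Bool)
def d : Circ := ((true, true) : Bool × Bool)

end Circ

/-! ### Auxiliary material -/

section Aux

open Circ

instance : DecidableEq Circ := inferInstanceAs (DecidableEq (Bool × Bool))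
instance : Fintype Circ := inferInstanceAs (Fintype (Bool × Bool))
instance : DecidableRel (α := Circ) (· ≤ ·) :=
  fun x y => inferInstanceAs (Decidable (x = y ∨ (x.level = false ∧ y.level = true)))
instance : DecidableRel (α := Circ × Circ) (· ≤ ·) :=
  fun x y => decidable_of_iff (x.1 ≤ y.1 ∧ x.2 ≤ y.2) Prod.le_def.symm

theorem J.le_def' {m : ℕ} (i j : J m) : i ≤ j ↔
    (J.val i = J.val j ∨ (J.val j % 2 = 1 ∧
      (J.val j = J.val i + 1 ∨ J.val i = J.val j + 1))) := Iff.rfl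

theorem J.val_lt {m : ℕ} (i : J m) : J.val i < m + 1 := @Fin.is_lt (m + 1) i

theorem circ_isOpen_of_isLowerSet {s : Set Circ} (h : IsLowerSet s) : IsOpen s := h
theorem circ_isLowerSet_of_isOpen {s : Set Circ} (h : IsOpen s) : IsLowerSet s := h
theorem jm_isOpen_of_isLowerSet {m : ℕ} {s : Set (J m)} (h : IsLowerSet s) : IsOpen s := h
theorem jm_isLowerSet_of_isOpen {m : ℕ} {s : Set (J m)} (h : IsOpen s) : IsLowerSet s := h

theorem isLowerSet_of_isOpen_prod {s : Set (Circ × Circ)} (h : IsOpen s) : IsLowerSet s := by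
  intro p q hqp hp
  rcases isOpen_prod_iff.mp h p.1 p.2 hp with ⟨u, v, hu, hv, h1, h2, huv⟩
  exact huv ⟨circ_isLowerSet_of_isOpen hu hqp.1 h1, circ_isLowerSet_of_isOpen hv hqp.2 h2⟩

/-- A continuous section is pointwise monotone in the base point. -/
theorem sec_mono {T : Type*} [TopologicalSpace T] {U : Set (Circ × Circ)} (hU : IsOpen U)
    (s : C(U, C(T, Circ))) (x y : U) (hxy : (x : Circ × Circ) ≤ (y : Circ × Circ)) (t : T) :
    s x t ≤ s y t := by
  have hc : Continuous fun z : U => s z t := (map_continuous s).eval_const t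
  have hV : IsOpen {z : Circ | z ≤ s y t} :=
    circ_isOpen_of_isLowerSet (fun z' z hz hz' => le_trans hz hz')
  rcases isOpen_induced_iff.mp (hV.preimage hc) with ⟨O, hO, hOeq⟩
  have hyO : (y : Circ × Circ) ∈ O := by
    have : y ∈ Subtype.val ⁻¹' O := by
      rw [hOeq]; exact (le_refl (s y t) : y ∈ (fun z : U => s z t) ⁻¹' {z : Circ | z ≤ s y t})
    exact this
  have hxO : (x : Circ × Circ) ∈ O := isLowerSet_of_isOpen_prod hO hxy hyO
  have : x ∈ Subtype.val ⁻¹' O := hxO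
  rw [hOeq] at this
  exact this

/-- The key rigidity argument: no section over an open set containing two distinct
maximal points of `Circ × Circ`. -/
theorem no_section_on_two_max {T : Type*} [TopologicalSpace T] (E E' : T)
    (hconn : ∀ S : Set T, IsOpen S → IsClosed S → (E ∈ S ↔ E' ∈ S))
    {U : Set (Circ × Circ)} (hU : IsOpen U) (s : C(U, C(T, Circ)))
    (pr pr' : Circ × Circ → Circ)
    (hval : ∀ x : U, s x E = pr (x : Circ × Circ) ∧ s x E' = pr' (x : Circ × Circ))
    (M₁ M₂ μ₁ μ₂ : Circ × Circ) (h₁ : M₁ ∈ U) (h₂ : M₂ ∈ U)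
    (l₁₁ : μ₁ ≤ M₁) (l₁₂ : μ₁ ≤ M₂) (l₂₁ : μ₂ ≤ M₁) (l₂₂ : μ₂ ≤ M₂)
    (hv : (pr' M₁ = Circ.c ∧ pr' M₂ = Circ.d) ∨ (pr' M₁ = Circ.d ∧ pr' M₂ = Circ.c))
    (hm₁ : pr' μ₁ = Circ.a) (hm₂ : pr' μ₂ = Circ.b)
    (hbad : ¬(pr M₁ = pr' M₁ ∧ pr M₂ = pr' M₂ ∧ pr μ₁ = Circ.a ∧ pr μ₂ = Circ.b)) :
    False := by
  have hμ₁U : μ₁ ∈ U := isLowerSet_of_isOpen_prod hU l₁₁ h₁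
  have hμ₂U : μ₂ ∈ U := isLowerSet_of_isOpen_prod hU l₂₁ h₁
  set v₁ : Circ := pr' M₁ with hv₁
  set v₂ : Circ := pr' M₂ with hv₂
  set α : C(T, Circ) := s ⟨M₁, h₁⟩ with hα
  set β : C(T, Circ) := s ⟨M₂, h₂⟩ with hβ
  set γ₁ : C(T, Circ) := s ⟨μ₁, hμ₁U⟩ with hγ₁
  set γ₂ : C(T, Circ) := s ⟨μ₂, hμ₂U⟩ with hγ₂
  have g1a : ∀ t, γ₁ t ≤ α t := fun t => sec_mono hU s _ _ l₁₁ t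
  have g1b : ∀ t, γ₁ t ≤ β t := fun t => sec_mono hU s _ _ l₁₂ t
  have g2a : ∀ t, γ₂ t ≤ α t := fun t => sec_mono hU s _ _ l₂₁ t
  have g2b : ∀ t, γ₂ t ≤ β t := fun t => sec_mono hU s _ _ l₂₂ t
  have f1 : ∀ z : Circ, z ≤ v₁ → Circ.a ≤ z → Circ.b ≤ z → z = v₁ := by
    rcases hv with ⟨e1, e2⟩ | ⟨e1, e2⟩ <;> rw [e1] <;> decide
  have f2 : ∀ z : Circ, z ≤ v₂ → Circ.a ≤ z → Circ.b ≤ z → z = v₂ := by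
    rcases hv with ⟨e1, e2⟩ | ⟨e1, e2⟩ <;> rw [e2] <;> decide
  have f3 : ∀ z : Circ, z ≤ Circ.a → z = Circ.a := by decide
  have f4 : ∀ z : Circ, z ≤ Circ.b → z = Circ.b := by decide
  have f5 : ∀ z : Circ, v₁ ≤ z → z = v₁ := by
    rcases hv with ⟨e1, e2⟩ | ⟨e1, e2⟩ <;> rw [e1] <;> decide
  have f6 : ∀ z : Circ, v₂ ≤ z → z = v₂ := by
    rcases hv with ⟨e1, e2⟩ | ⟨e1, e2⟩ <;> rw [e2] <;> decide
  have f7 : ∀ z : Circ, Circ.a ≤ z → z ≤ v₁ → z ≤ v₂ → z = Circ.a := by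
    rcases hv with ⟨e1, e2⟩ | ⟨e1, e2⟩ <;> rw [e1, e2] <;> decide
  have f8 : ∀ z : Circ, Circ.b ≤ z → z ≤ v₁ → z ≤ v₂ → z = Circ.b := by
    rcases hv with ⟨e1, e2⟩ | ⟨e1, e2⟩ <;> rw [e1, e2] <;> decide
  set A : Set T := {t | α t = v₁ ∧ β t = v₂ ∧ γ₁ t = Circ.a ∧ γ₂ t = Circ.b} with hA
  have hopen : IsOpen A := by
    have : A = α ⁻¹' {z | z ≤ v₁} ∩ (β ⁻¹' {z | z ≤ v₂} ∩
        (γ₁ ⁻¹' {z | z ≤ Circ.a} ∩ γ₂ ⁻¹' {z | z ≤ Circ.b})) := by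
      ext t
      constructor
      · rintro ⟨e1, e2, e3, e4⟩
        exact ⟨le_of_eq e1, le_of_eq e2, le_of_eq e3, le_of_eq e4⟩
      · rintro ⟨e1, e2, e3, e4⟩
        have h3 : γ₁ t = Circ.a := f3 _ e3
        have h4 : γ₂ t = Circ.b := f4 _ e4
        refine ⟨f1 _ e1 (h3 ▸ g1a t) (h4 ▸ g2a t), f2 _ e2 (h3 ▸ g1b t) (h4 ▸ g2b t), h3, h4⟩
    rw [this]
    have lo : ∀ w : Circ, IsOpen {z : Circ | z ≤ w} :=
      fun w => circ_isOpen_of_isLowerSet (fun z' z hz hz' => le_trans hz hz')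
    exact ((lo v₁).preimage (map_continuous α)).inter
      (((lo v₂).preimage (map_continuous β)).inter
        (((lo Circ.a).preimage (map_continuous γ₁)).inter
          ((lo Circ.b).preimage (map_continuous γ₂))))
  have hclosed : IsClosed A := by
    have : A = α ⁻¹' {z | v₁ ≤ z} ∩ (β ⁻¹' {z | v₂ ≤ z} ∩
        (γ₁ ⁻¹' {z | Circ.a ≤ z} ∩ γ₂ ⁻¹' {z | Circ.b ≤ z})) := by
      ext t
      constructor
      · rintro ⟨e1, e2, e3, e4⟩
        exact ⟨le_of_eq e1.symm, le_of_eq e2.symm, le_of_eq e3.symm, le_of_eq e4.symm⟩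
      · rintro ⟨e1, e2, e3, e4⟩
        have h1 : α t = v₁ := f5 _ e1
        have h2 : β t = v₂ := f6 _ e2
        refine ⟨h1, h2, f7 _ e3 (h1 ▸ g1a t) (h2 ▸ g1b t), f8 _ e4 (h1 ▸ g2a t) (h2 ▸ g2b t)⟩
    rw [this]
    have cl : ∀ w : Circ, IsClosed {z : Circ | w ≤ z} := by
      intro w
      rw [← isOpen_compl_iff]
      exact circ_isOpen_of_isLowerSet
        (fun z' z hz hz' hw => hz' (le_trans hw hz))
    exact ((cl v₁).preimage (map_continuous α)).inter
      (((cl v₂).preimage (map_continuous β)).inter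
        (((cl Circ.a).preimage (map_continuous γ₁)).inter
          ((cl Circ.b).preimage (map_continuous γ₂))))
  have hE' : E' ∈ A := by
    refine ⟨(hval ⟨M₁, h₁⟩).2, (hval ⟨M₂, h₂⟩).2, ?_, ?_⟩
    · rw [(hval ⟨μ₁, hμ₁U⟩).2]; exact hm₁
    · rw [(hval ⟨μ₂, hμ₂U⟩).2]; exact hm₂
  have hE : E ∈ A := (hconn A hopen hclosed).mpr hE'
  obtain ⟨e1, e2, e3, e4⟩ := hE
  exact hbad ⟨((hval ⟨M₁, h₁⟩).1).symm.trans e1, ((hval ⟨M₂, h₂⟩).1).symm.trans e2,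
    ((hval ⟨μ₁, hμ₁U⟩).1).symm.trans e3, ((hval ⟨μ₂, hμ₂U⟩).1).symm.trans e4⟩

/-- No section over an open set containing two distinct maximal points, stated in terms of
boolean coordinates of the maximal points. -/
theorem no_section_max {T : Type*} [TopologicalSpace T] (E E' : T)
    (hconn : ∀ S : Set T, IsOpen S → IsClosed S → (E ∈ S ↔ E' ∈ S))
    {U : Set (Circ × Circ)} (hU : IsOpen U) (s : C(U, C(T, Circ)))
    (hs : ∀ x : U, s x E = (x : Circ × Circ).1 ∧ s x E' = (x : Circ × Circ).2)
    (b₁ b₂ b₃ b₄ : Bool)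
    (h₁ : (((true, b₁), (true, b₂)) : Circ × Circ) ∈ U)
    (h₂ : (((true, b₃), (true, b₄)) : Circ × Circ) ∈ U)
    (hne : (b₁, b₂) ≠ (b₃, b₄)) : False := by
  have hconn' : ∀ S : Set T, IsOpen S → IsClosed S → (E' ∈ S ↔ E ∈ S) :=
    fun S hO hC => (hconn S hO hC).symm
  have hs' : ∀ x : U, s x E' = (x : Circ × Circ).2 ∧ s x E = (x : Circ × Circ).1 :=
    fun x => ⟨(hs x).2, (hs x).1⟩
  cases b₁ <;> cases b₂ <;> cases b₃ <;> cases b₄ <;>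
  first
  | exact absurd rfl hne
  | exact no_section_on_two_max E E' hconn hU s Prod.fst Prod.snd hs _ _
      (Circ.a, Circ.a) (Circ.b, Circ.b) h₁ h₂ (by decide) (by decide) (by decide) (by decide)
      (by decide) rfl rfl (by decide)
  | exact no_section_on_two_max E E' hconn hU s Prod.fst Prod.snd hs _ _
      (Circ.b, Circ.a) (Circ.a, Circ.b) h₁ h₂ (by decide) (by decide) (by decide) (by decide)
      (by decide) rfl rfl (by decide)
  | exact no_section_on_two_max E' E hconn' hU s Prod.snd Prod.fst hs' _ _
      (Circ.a, Circ.a) (Circ.b, Circ.b) h₁ h₂ (by decide) (by decide) (by decide) (by decide)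
      (by decide) rfl rfl (by decide)

/-! #### Connectivity of the parameter spaces -/

theorem I_conn (S : Set unitInterval) (hO : IsOpen S) (hC : IsClosed S) :
    ((0 : unitInterval) ∈ S ↔ (1 : unitInterval) ∈ S) := by
  rcases isClopen_iff.mp ⟨hC, hO⟩ with rfl | rfl <;> simp

/-- The point `⟨k, h⟩` of the fence `J m`. -/
def jpt {m : ℕ} (k : ℕ) (h : k < m + 1) : J m := Fin.mk k h

theorem jpt_val {m : ℕ} (k : ℕ) (h : k < m + 1) : J.val (jpt k h) = k := rfl

theorem J_conn {m : ℕ} (S : Set (J m)) (hO : IsOpen S) (hC : IsClosed S) :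
    ((J.zero : J m) ∈ S ↔ (J.last : J m) ∈ S) := by
  have hl : IsLowerSet S := jm_isLowerSet_of_isOpen hO
  have hu : IsLowerSet Sᶜ := jm_isLowerSet_of_isOpen hC.isOpen_compl
  have comp : ∀ x y : J m, x ≤ y → (x ∈ S ↔ y ∈ S) := by
    intro x y h
    constructor
    · intro hx; by_contra hy; exact (hu h hy) hx
    · intro hy; exact hl h hy
  have step : ∀ k (h : k + 1 < m + 1),
      ((jpt k (by omega) : J m) ∈ S ↔ (jpt (k + 1) h : J m) ∈ S) := by
    intro k h
    by_cases h2 : (k + 1) % 2 = 1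
    · exact comp (jpt k (by omega)) (jpt (k + 1) h)
        ((J.le_def' (jpt k (by omega)) (jpt (k + 1) h)).mpr (Or.inr ⟨h2, Or.inl rfl⟩))
    · have h2' : k % 2 = 1 := by omega
      exact (comp (jpt (k + 1) h) (jpt k (by omega))
        ((J.le_def' (jpt (k + 1) h) (jpt k (by omega))).mpr (Or.inr ⟨h2', Or.inr rfl⟩))).symm
  have main : ∀ k (h : k < m + 1), ((jpt k h : J m) ∈ S ↔ (J.zero : J m) ∈ S) := by
    intro k
    induction k with
    | zero =>
      intro h
      have : (jpt 0 h : J m) = J.zero :=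
        @Fin.val_injective (m + 1) _ _ (by simp [jpt, J.zero])
      rw [this]
    | succ k ih =>
      intro h
      rw [← step k h]
      exact ih (by omega)
  have hlast : (J.last : J m) = jpt m (by omega) :=
    @Fin.val_injective (m + 1) _ _ (by simp [jpt, J.last])
  rw [hlast]
  exact (main m (by omega)).symm

/-! #### Upper bound: explicit covers and sections -/

theorem mono_continuous_JC {m : ℕ} {f : J m → Circ} (hf : Monotone f) : Continuous f :=
  continuous_def.mpr fun V hV =>
    jm_isOpen_of_isLowerSet ((circ_isLowerSet_of_isOpen hV).preimage hf)

/-- The fence path `x ≤ u' ≥ a ≤ v' ≥ y` of length `4`. -/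
def fence5 (x u' v' y : Circ) : ℕ → Circ := fun n =>
  if n = 0 then x else if n = 1 then u'
  else if n = 2 then Circ.a else if n = 3 then v' else y

theorem fence5_mono_nat {x u' v' y : Circ} (hx : x ≤ u') (hy : y ≤ v')
    (hau : Circ.a ≤ u') (hav : Circ.a ≤ v') :
    ∀ a1 a2 : ℕ, a1 < 5 → a2 < 5 → (a1 = a2 ∨ (a2 % 2 = 1 ∧ (a2 = a1 + 1 ∨ a1 = a2 + 1))) →
      fence5 x u' v' y a1 ≤ fence5 x u' v' y a2 := by
  intro a1 a2 h1 h2 h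
  interval_cases a1 <;> interval_cases a2 <;> simp_all [fence5]

theorem fence5_mono {x u' v' y : Circ} (hx : x ≤ u') (hy : y ≤ v')
    (hau : Circ.a ≤ u') (hav : Circ.a ≤ v') :
    Monotone (fun j : J 4 => fence5 x u' v' y (J.val j)) := by
  intro j k h
  rw [J.le_def'] at h
  show fence5 x u' v' y (J.val j) ≤ fence5 x u' v' y (J.val k)
  exact fence5_mono_nat hx hy hau hav _ _ (J.val_lt j) (J.val_lt k) h

def uu : Fin 4 → Circ := fun i => if i.val ≤ 1 then Circ.c else Circ.d
def vv : Fin 4 → Circ := fun i => if i.val % 2 = 0 then Circ.c else Circ.d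

theorem hasCC4 : hasCCCover Circ 4 4 := by
  have hcov : ∀ p : Circ × Circ, ∃ i : Fin 4, p.1 ≤ uu i ∧ p.2 ≤ vv i := by decide
  have hmin : ∀ i : Fin 4, Circ.a ≤ uu i ∧ Circ.a ≤ vv i := by decide
  have hlow : ∀ w : Circ, IsOpen {z : Circ | z ≤ w} :=
    fun w => circ_isOpen_of_isLowerSet fun p q hpq hp => le_trans hpq hp
  refine ⟨fun i => {z : Circ | z ≤ uu i} ×ˢ {z : Circ | z ≤ vv i}, fun i => ?_, ?_, fun i => ?_⟩
  · exact (hlow (uu i)).prod (hlow (vv i))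
  · ext p
    simp only [Set.mem_iUnion, Set.mem_prod, Set.mem_univ, iff_true, Set.mem_setOf_eq]
    exact hcov p
  · refine ⟨⟨fun p => ⟨fun jx =>
        fence5 (p : Circ × Circ).1 (uu i) (vv i) (p : Circ × Circ).2 (J.val jx), ?_⟩, ?_⟩,
        fun p => ⟨?_, ?_⟩⟩
    · exact mono_continuous_JC (fence5_mono p.2.1 p.2.2 (hmin i).1 (hmin i).2)
    · rw [ContinuousMap.continuous_compactOpen]
      intro K hK V hV
      have hset : {p : ({z : Circ | z ≤ uu i} ×ˢ {z : Circ | z ≤ vv i} : Set (Circ × Circ)) |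
          Set.MapsTo (fun jx =>
            fence5 (p : Circ × Circ).1 (uu i) (vv i) (p : Circ × Circ).2 (J.val jx)) K V} =
          ⋂ jx ∈ K, {p : ({z : Circ | z ≤ uu i} ×ˢ {z : Circ | z ≤ vv i} : Set (Circ × Circ)) |
            fence5 (p : Circ × Circ).1 (uu i) (vv i) (p : Circ × Circ).2 (J.val jx) ∈ V} := by
        ext p
        simp [Set.MapsTo]
      simp only [ContinuousMap.coe_mk]
      rw [hset]
      refine (Set.toFinite K).isOpen_biInter fun jx _ => ?_
      have hj : J.val jx < 5 := J.val_lt jx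
      set n := J.val jx with hn
      clear_value n
      have hfst : IsOpen {p : ({z : Circ | z ≤ uu i} ×ˢ {z : Circ | z ≤ vv i} :
          Set (Circ × Circ)) | (p : Circ × Circ).1 ∈ V} :=
        hV.preimage (continuous_fst.comp continuous_subtype_val)
      have hsnd : IsOpen {p : ({z : Circ | z ≤ uu i} ×ˢ {z : Circ | z ≤ vv i} :
          Set (Circ × Circ)) | (p : Circ × Circ).2 ∈ V} :=
        hV.preimage (continuous_snd.comp continuous_subtype_val)
      interval_cases n
      · simpa [fence5] using hfst
      · by_cases h : uu i ∈ V <;> simp [fence5, h]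
      · by_cases h : Circ.a ∈ V <;> simp [fence5, h]
      · by_cases h : vv i ∈ V <;> simp [fence5, h]
      · simpa [fence5] using hsnd
    · rfl
    · rfl

/-! #### From combinatorial sections to genuine paths -/

noncomputable def nq (t : unitInterval) : ℕ :=
  if (t : ℝ) < 1/4 then 0 else if (t : ℝ) = 1/4 then 1
  else if (t : ℝ) < 3/4 then 2 else if (t : ℝ) = 3/4 then 3 else 4

theorem nq_lt (t : unitInterval) : nq t < 5 := by unfold nq; split_ifs <;> omega

noncomputable def qmap (t : unitInterval) : J 4 := jpt (nq t) (nq_lt t)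

def Wset : ℕ → Set unitInterval := fun n =>
  if n = 0 then {t | (t : ℝ) < 1/4} else if n = 1 then {t | (t : ℝ) < 3/4}
  else if n = 2 then {t | 1/4 < (t : ℝ) ∧ (t : ℝ) < 3/4} else if n = 3 then {t | 1/4 < (t : ℝ)}
  else if n = 4 then {t | 3/4 < (t : ℝ)} else ∅

theorem Wset_open (n : ℕ) : IsOpen (Wset n) := by
  unfold Wset
  split_ifs
  · exact isOpen_lt continuous_subtype_val continuous_const
  · exact isOpen_lt continuous_subtype_val continuous_const
  · exact (isOpen_lt continuous_const continuous_subtype_val).inter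
      (isOpen_lt continuous_subtype_val continuous_const)
  · exact isOpen_lt continuous_const continuous_subtype_val
  · exact isOpen_lt continuous_const continuous_subtype_val
  · exact isOpen_empty

theorem mem_W_nq (t : unitInterval) : t ∈ Wset (nq t) := by
  unfold nq
  split_ifs with h1 h2 h3 h4
  · simpa [Wset] using h1
  · simp only [Wset]
    norm_num
    rw [h2]; norm_num
  · simp only [Wset]
    norm_num
    exact ⟨lt_of_le_of_ne (not_lt.mp h1) (Ne.symm h2), h3⟩
  · simp only [Wset]
    norm_num
    rw [h4]; norm_num
  · simp only [Wset]
    norm_num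
    exact lt_of_le_of_ne (not_lt.mp h3) (Ne.symm h4)

theorem nq_eq0 {t : unitInterval} (h : (t : ℝ) < 1/4) : nq t = 0 := by
  unfold nq; split_ifs <;> first | rfl | (exfalso; linarith)

theorem nq_eq1 {t : unitInterval} (h : (t : ℝ) = 1/4) : nq t = 1 := by
  unfold nq; split_ifs <;> first | rfl | (exfalso; linarith)

theorem nq_eq2 {t : unitInterval} (h1 : 1/4 < (t : ℝ)) (h2 : (t : ℝ) < 3/4) : nq t = 2 := by
  unfold nq; split_ifs <;> first | rfl | (exfalso; linarith)

theorem nq_eq3 {t : unitInterval} (h : (t : ℝ) = 3/4) : nq t = 3 := by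
  unfold nq; split_ifs <;> first | rfl | (exfalso; linarith)

theorem nq_eq4 {t : unitInterval} (h : 3/4 < (t : ℝ)) : nq t = 4 := by
  unfold nq; split_ifs <;> first | rfl | (exfalso; linarith)

theorem W_le (t : unitInterval) (i : J 4) (ht : t ∈ Wset (J.val i)) : qmap t ≤ i := by
  rw [J.le_def']
  have hval : J.val (qmap t) = nq t := rfl
  rw [hval]
  have h5 : J.val i < 5 := J.val_lt i
  set n := J.val i with hn
  clear_value n
  interval_cases n
  · norm_num [Wset] at ht
    have := nq_eq0 ht
    omega
  · norm_num [Wset] at ht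
    have : nq t = 0 ∨ nq t = 1 ∨ nq t = 2 := by
      rcases lt_trichotomy (t : ℝ) (1/4) with h | h | h
      · exact Or.inl (nq_eq0 h)
      · exact Or.inr (Or.inl (nq_eq1 h))
      · exact Or.inr (Or.inr (nq_eq2 h ht))
    omega
  · norm_num [Wset] at ht
    have := nq_eq2 ht.1 ht.2
    omega
  · norm_num [Wset] at ht
    have : nq t = 2 ∨ nq t = 3 ∨ nq t = 4 := by
      rcases lt_trichotomy (t : ℝ) (3/4) with h | h | h
      · exact Or.inl (nq_eq2 ht h)
      · exact Or.inr (Or.inl (nq_eq3 h))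
      · exact Or.inr (Or.inr (nq_eq4 h))
    omega
  · norm_num [Wset] at ht
    have := nq_eq4 ht
    omega

theorem qmap_cont : Continuous qmap := by
  rw [continuous_def]
  intro V hV
  have hVl : IsLowerSet V := jm_isLowerSet_of_isOpen hV
  have heq : qmap ⁻¹' V = ⋃ i ∈ V, Wset (J.val i) := by
    ext t
    simp only [Set.mem_preimage, Set.mem_iUnion, exists_prop]
    constructor
    · intro h; exact ⟨qmap t, h, mem_W_nq t⟩
    · rintro ⟨i, hiV, hw⟩; exact hVl (W_le t i hw) hiV
  rw [heq]
  exact isOpen_biUnion fun i _ => Wset_open _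

theorem qmap_zero : qmap 0 = (J.zero : J 4) := by
  apply @Fin.val_injective 5
  show nq 0 = J.val (J.zero : J 4)
  have : ((0 : unitInterval) : ℝ) = 0 := rfl
  unfold nq
  rw [this]
  norm_num
  rfl

theorem qmap_one : qmap 1 = (J.last : J 4) := by
  apply @Fin.val_injective 5
  show nq 1 = J.val (J.last : J 4)
  have : ((1 : unitInterval) : ℝ) = 1 := rfl
  unfold nq
  rw [this]
  norm_num
  rfl

theorem hasTC4 : hasTCCover Circ 4 := by
  obtain ⟨U, h1, h2, h3⟩ := hasCC4
  refine ⟨U, h1, h2, fun i => ?_⟩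
  obtain ⟨s, hs⟩ := h3 i
  refine ⟨⟨fun x => (s x).comp ⟨qmap, qmap_cont⟩, ?_⟩, fun x => ⟨?_, ?_⟩⟩
  · exact (ContinuousMap.continuous_precomp _).comp (map_continuous s)
  · show s x (qmap 0) = _
    rw [qmap_zero]; exact (hs x).1
  · show s x (qmap 1) = _
    rw [qmap_one]; exact (hs x).2

/-! #### Lower bounds -/

theorem not_small_TC (n : ℕ) (h : hasTCCover Circ n) : 4 ≤ n := by
  by_contra hn
  push_neg at hn
  obtain ⟨U, hopen, hcov, hsec⟩ := h
  have hmem : ∀ p : Bool × Bool, ∃ i, (((true, p.1), (true, p.2)) : Circ × Circ) ∈ U i := by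
    intro p
    have : (((true, p.1), (true, p.2)) : Circ × Circ) ∈ ⋃ i, U i := by rw [hcov]; trivial
    exact Set.mem_iUnion.mp this
  choose f hf using hmem
  have hcard : Fintype.card (Fin n) < Fintype.card (Bool × Bool) := by simp; omega
  obtain ⟨p, q, hpq, hfe⟩ := Fintype.exists_ne_map_eq_of_card_lt f hcard
  obtain ⟨s, hs⟩ := hsec (f p)
  refine no_section_max (0 : unitInterval) 1 I_conn (hopen (f p)) s hs p.1 p.2 q.1 q.2
    (hf p) ?_ ?_
  · rw [hfe]; exact hf q
  · simpa using hpq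

theorem not_small_CC (m n : ℕ) (h : hasCCCover Circ m n) : 4 ≤ n := by
  by_contra hn
  push_neg at hn
  obtain ⟨U, hopen, hcov, hsec⟩ := h
  have hmem : ∀ p : Bool × Bool, ∃ i, (((true, p.1), (true, p.2)) : Circ × Circ) ∈ U i := by
    intro p
    have : (((true, p.1), (true, p.2)) : Circ × Circ) ∈ ⋃ i, U i := by rw [hcov]; trivial
    exact Set.mem_iUnion.mp this
  choose f hf using hmem
  have hcard : Fintype.card (Fin n) < Fintype.card (Bool × Bool) := by simp; omega
  obtain ⟨p, q, hpq, hfe⟩ := Fintype.exists_ne_map_eq_of_card_lt f hcard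
  obtain ⟨s, hs⟩ := hsec (f p)
  refine no_section_max (J.zero : J m) J.last J_conn (hopen (f p)) s hs p.1 p.2 q.1 q.2
    (hf p) ?_ ?_
  · rw [hfe]; exact hf q
  · simpa using hpq

end Aux

/-- For the four-point minimal finite model `P = {a,b,c,d}` of the circle
(`a, b < c, d`) with the Alexandrov topology, `TC(P) = CC(P) = 4`. -/
theorem TC_and_CC_of_circle_model :
    topComplexity Circ = 4 ∧ CC Circ = 4 := by
  constructor
  · apply le_antisymm
    · have hmem : ((4 : ℕ) : ℕ∞) ∈ (↑) '' {n : ℕ | hasTCCover Circ n} :=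
        ⟨4, hasTC4, rfl⟩
      simpa [topComplexity] using sInf_le hmem
    · apply le_sInf
      rintro b ⟨k, hk, rfl⟩
      exact_mod_cast not_small_TC k hk
  · apply le_antisymm
    · refine le_trans (iInf_le _ 4) ?_
      have hmem : ((4 : ℕ) : ℕ∞) ∈ (↑) '' {n : ℕ | hasCCCover Circ 4 n} :=
        ⟨4, hasCC4, rfl⟩
      simpa [CCm] using sInf_le hmem
    · apply le_iInf
      intro m
      apply le_sInf
      rintro b ⟨k, hk, rfl⟩
      exact_mod_cast not_small_CC m k hk
end
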